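/- Let X and Y be finite-dimensional K-vector spaces with skew-symmetric bilinear forms ω_X and ω_Y, and let φ : X → Y be a linear map with ω_Y(φ(x₁), φ(x₂)) = ω_X(x₁, x₂) for all x₁, x₂ ∈ X. Let θ : Y → X* be the linear map θ(y) = ω_Y(y) ∘ φ, and for α ∈ X* let θ_α : Y → X* be θ_α(y) = θ(y) + α. Then, for any subset S ⊆ X with ω_X(s,s) = 0 for all s ∈ S: the affine transvection group Tr^α(S, φ) acts on the set Y/ker θ of cosets of ker θ, the set im θ_α is invariant under the dual transvection group Tr(S)*, and θ_α induces a group isomorphism from the permutation group induced by Tr^α(S, φ) on Y/ker θ to the restriction of Tr(S)* to im θ_α. -/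

import Mathlib

/-- Symplectic transvections as permutations. -/
def transvectionSet {K X : Type*} [Field K] [AddCommGroup X] [Module K X]
    (ω : X →ₗ[K] X →ₗ[K] K) (S : Set X) : Set (Equiv.Perm X) :=
  {f | ∃ s ∈ S, ∃ k : K, k ≠ 0 ∧ ∀ x, f x = x + (k * ω x s) • s}

/-- The transvection group `Tr(S)`. -/
def transvectionGroup {K X : Type*} [Field K] [AddCommGroup X] [Module K X]
    (ω : X →ₗ[K] X →ₗ[K] K) (S : Set X) : Subgroup (Equiv.Perm X) :=
  Subgroup.closure (transvectionSet ω S)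

/-- Affine transvections `T^{α(s)}_{φ(s),k} : y ↦ y + k(ω_Y(y,φ(s)) + α(s))·φ(s)`
for `s ∈ S` and `k ≠ 0`, as permutations of `Y`. -/
def affTransvectionSet {K Y X : Type*} [Field K] [AddCommGroup Y] [Module K Y]
    (ωY : Y →ₗ[K] Y →ₗ[K] K) (S : Set X) (α : X → K) (φ : X → Y) :
    Set (Equiv.Perm Y) :=
  {f | ∃ s ∈ S, ∃ k : K, k ≠ 0 ∧ ∀ y, f y = y + (k * (ωY y (φ s) + α s)) • φ s}

/-- The affine transvection group `Tr^α(S, φ)`. -/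
def affTransvectionGroup {K Y X : Type*} [Field K] [AddCommGroup Y] [Module K Y]
    (ωY : Y →ₗ[K] Y →ₗ[K] K) (S : Set X) (α : X → K) (φ : X → Y) :
    Subgroup (Equiv.Perm Y) :=
  Subgroup.closure (affTransvectionSet ωY S α φ)

/-- with `φ : X → Y` linear respecting the skew-symmetric forms,
`θ : Y → X*`, `θ(y) = ω_Y(y) ∘ φ`, and `θ_α(y) = θ(y) + α`: for any `S ⊆ X`
with `ω_X(s,s) = 0` on `S`, the affine transvection group `Tr^α(S,φ)` acts on
`Y/ker θ` (it preserves the fibers of `θ`), `im θ_α` is `Tr(S)*`-invariant,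
and `θ_α` induces a group isomorphism from `Tr^α(S,φ)` on `Y/ker θ` to the
restriction of `Tr(S)*` to `im θ_α` (expressed by the intertwining
conditions in both directions). -/
lemma exists_perm_aff {K Y : Type*} [Field K] [AddCommGroup Y] [Module K Y]
    (ω : Y →ₗ[K] Y →ₗ[K] K) (v : Y) (hv : ω v v = 0) (a k : K) :
    ∃ f : Equiv.Perm Y, ∀ y, f y = y + (k * (ω y v + a)) • v := by
  refine ⟨⟨fun y => y + (k * (ω y v + a)) • v, fun y => y + (-k * (ω y v + a)) • v,
    fun y => ?_, fun y => ?_⟩, fun y => rfl⟩ <;>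
  · simp only [map_add, map_smul, LinearMap.add_apply, LinearMap.smul_apply, hv,
      smul_eq_mul, mul_zero, add_zero]
    module

theorem stmt6 {K X Y : Type*} [Field K] [AddCommGroup X] [Module K X]
    [AddCommGroup Y] [Module K Y]
    [FiniteDimensional K X] [FiniteDimensional K Y]
    (ωX : X →ₗ[K] X →ₗ[K] K) (hskewX : ∀ x₁ x₂, ωX x₁ x₂ = -ωX x₂ x₁)
    (ωY : Y →ₗ[K] Y →ₗ[K] K) (hskewY : ∀ y₁ y₂, ωY y₁ y₂ = -ωY y₂ y₁)
    (φ : X →ₗ[K] Y) (hφ : ∀ x₁ x₂, ωY (φ x₁) (φ x₂) = ωX x₁ x₂)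
    (α : Module.Dual K X)
    (S : Set X) (hS : ∀ s ∈ S, ωX s s = 0) :
    -- let `θ y = ω_Y(y) ∘ φ` and `θ_α y = θ y + α`
    ∀ θ : Y →ₗ[K] Module.Dual K X, θ = ωY.compl₂ φ →
    ∀ θα : Y → Module.Dual K X, θα = (fun y => θ y + α) →
    -- `Tr^α(S,φ)` acts on `Y / ker θ`
    ((∀ g ∈ affTransvectionGroup ωY S ⇑α ⇑φ, ∀ y y' : Y,
        θ y = θ y' ↔ θ (g y) = θ (g y')) ∧
    -- `im θ_α` is `Tr(S)*`-invariant
    (∀ h ∈ transvectionGroup ωX S, ∀ y : Y, ∃ y' : Y,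
        ∀ x, θα y (h x) = θα y' x) ∧
    -- `θ_α` intertwines the two actions in both directions
    (∀ g ∈ affTransvectionGroup ωY S ⇑α ⇑φ, ∃ h ∈ transvectionGroup ωX S,
        ∀ y x, θα (g y) x = θα y (h x)) ∧
    (∀ h ∈ transvectionGroup ωX S, ∃ g ∈ affTransvectionGroup ωY S ⇑α ⇑φ,
        ∀ y x, θα (g y) x = θα y (h x))) := by
  intro θ hθ θα hθα
  subst hθ hθα
  set θ : Y →ₗ[K] Module.Dual K X := ωY.compl₂ φ with hθ
  -- forward key lemma
  have key : ∀ g ∈ affTransvectionGroup ωY S ⇑α ⇑φ, ∃ h ∈ transvectionGroup ωX S,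
      ∀ y x, (θ (g y) + α) x = (θ y + α) (h x) := by
    intro g hg
    induction hg using Subgroup.closure_induction with
    | mem g hg =>
      obtain ⟨s, hs, k, hk, hgy⟩ := hg
      obtain ⟨f, hf⟩ := exists_perm_aff ωX s (hS s hs) 0 (-k)
      refine ⟨f, Subgroup.subset_closure ⟨s, hs, -k, neg_ne_zero.2 hk, fun x => by
        rw [hf x]; ring_nf⟩, fun y x => ?_⟩
      simp only [hgy y, hf x, hθ, LinearMap.add_apply, LinearMap.compl₂_apply, map_add,
        map_smul, LinearMap.add_apply, LinearMap.smul_apply, smul_eq_mul, hφ]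
      linear_combination (k * (ωY y (φ s) + α s)) * hskewX s x
    | one => exact ⟨1, one_mem _, fun y x => rfl⟩
    | mul g₁ g₂ _ _ ih₁ ih₂ =>
      obtain ⟨h₁, hh₁, e₁⟩ := ih₁
      obtain ⟨h₂, hh₂, e₂⟩ := ih₂
      exact ⟨h₂ * h₁, mul_mem hh₂ hh₁, fun y x => by
        simpa [Equiv.Perm.mul_apply] using (e₁ (g₂ y) x).trans (e₂ y (h₁ x))⟩
    | inv g hg ih =>
      obtain ⟨h, hh, e⟩ := ih
      refine ⟨h⁻¹, inv_mem hh, fun y x => ?_⟩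
      have := e (g⁻¹ y) (h⁻¹ x)
      simp only [Equiv.Perm.coe_inv, Equiv.apply_symm_apply] at this
      exact this.symm
  -- reverse key lemma
  have rev : ∀ h ∈ transvectionGroup ωX S, ∃ g ∈ affTransvectionGroup ωY S ⇑α ⇑φ,
      ∀ y x, (θ (g y) + α) x = (θ y + α) (h x) := by
    intro h hh
    induction hh using Subgroup.closure_induction with
    | mem h hh =>
      obtain ⟨s, hs, k, hk, hhx⟩ := hh
      have hvs : ωY (φ s) (φ s) = 0 := by rw [hφ]; exact hS s hs
      obtain ⟨g, hg⟩ := exists_perm_aff ωY (φ s) hvs (α s) (-k)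
      refine ⟨g, Subgroup.subset_closure ⟨s, hs, -k, neg_ne_zero.2 hk, hg⟩, fun y x => ?_⟩
      simp only [hg y, hhx x, hθ, LinearMap.add_apply, LinearMap.compl₂_apply, map_add,
        map_smul, LinearMap.add_apply, LinearMap.smul_apply, smul_eq_mul, hφ]
      linear_combination (-k * (ωY y (φ s) + α s)) * hskewX s x
    | one => exact ⟨1, one_mem _, fun y x => rfl⟩
    | mul h₁ h₂ _ _ ih₁ ih₂ =>
      obtain ⟨g₁, hg₁, e₁⟩ := ih₁
      obtain ⟨g₂, hg₂, e₂⟩ := ih₂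
      exact ⟨g₂ * g₁, mul_mem hg₂ hg₁, fun y x => by
        simpa [Equiv.Perm.mul_apply] using (e₂ (g₁ y) x).trans (e₁ y (h₂ x))⟩
    | inv h hh ih =>
      obtain ⟨g, hg, e⟩ := ih
      refine ⟨g⁻¹, inv_mem hg, fun y x => ?_⟩
      have := e (g⁻¹ y) (h⁻¹ x)
      simp only [Equiv.Perm.coe_inv, Equiv.apply_symm_apply] at this
      exact this.symm
  refine ⟨?_, ?_, key, rev⟩
  · intro g hg y y'
    obtain ⟨h, hh, e⟩ := key g hg
    constructor
    · intro hyy'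
      ext x
      have h1 := e y x
      have h2 := e y' x
      rw [hyy'] at h1
      simp only [LinearMap.add_apply] at h1 h2
      exact add_right_cancel (h1.trans h2.symm)
    · intro hyy'
      ext x
      have h1 := e y (h⁻¹ x)
      have h2 := e y' (h⁻¹ x)
      simp only [Equiv.Perm.coe_inv, Equiv.apply_symm_apply, LinearMap.add_apply, hyy'] at h1 h2
      have := h1.symm.trans h2
      exact add_right_cancel this
  · intro h hh y
    obtain ⟨g, hg, e⟩ := rev h hh
    exact ⟨g y, fun x => (e y x).symm⟩
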